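/- Suppose {R_j}_{j∈ℤ} ⊆ L(K,H) satisfy the fundamental equations and geometric bounds on U_{s,r}, and let P = R_{-1}A_1, Q = A_1 R_{-1}. Then A_i = Q A_i P + (I-Q) A_i (I-P) for i = 0, 1. -/

import Mathlib

open ContinuousLinearMap Filter

/-- with `P = R₋₁A₁` and `Q = A₁R₋₁`, each coefficient satisfies
`Aᵢ = Q Aᵢ P + (I-Q) Aᵢ (I-P)` for `i = 0, 1`. -/
theorem pencil_block_diagonal
    {H K : Type*} [NormedAddCommGroup H] [NormedSpace ℂ H] [CompleteSpace H]
    [NormedAddCommGroup K] [NormedSpace ℂ K] [CompleteSpace K]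
    (s r : ℝ) (hs : 0 ≤ s) (hsr : s < r)
    (A₀ A₁ : H →L[ℂ] K) (R : ℤ → (K →L[ℂ] H))
    (hgb : ∀ δ ε : ℝ, 0 < δ → 0 < ε → s + ε < r - δ →
      ∃ c d : ℝ, 0 < c ∧ 0 < d ∧
        ∀ j : ℕ, ‖R (j : ℤ)‖ ≤ c / (r - δ) ^ j ∧ ‖R (-(j : ℤ))‖ ≤ d * (s + ε) ^ j)
    (hleft : ∀ j : ℤ, (R (j - 1)).comp A₁ + (R j).comp A₀ =
      if j = 0 then (1 : H →L[ℂ] H) else 0)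
    (hright : ∀ j : ℤ, A₁.comp (R (j - 1)) + A₀.comp (R j) =
      if j = 0 then (1 : K →L[ℂ] K) else 0) :
    ∀ Ai ∈ ({A₀, A₁} : Set (H →L[ℂ] K)),
      Ai = ((A₁.comp (R (-1))).comp (Ai.comp ((R (-1)).comp A₁))) +
        ((1 - A₁.comp (R (-1))).comp (Ai.comp (1 - (R (-1)).comp A₁))) := by
  -- nonzero-index fundamental equations
  have hL : ∀ j : ℤ, j ≠ 0 → (R (j - 1)).comp A₁ = -((R j).comp A₀) := by
    intro j hj
    have h := hleft j
    rw [if_neg hj] at h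
    exact eq_neg_of_add_eq_zero_left h
  have hR : ∀ j : ℤ, j ≠ 0 → A₁.comp (R (j - 1)) = -(A₀.comp (R j)) := by
    intro j hj
    have h := hright j
    rw [if_neg hj] at h
    exact eq_neg_of_add_eq_zero_left h
  have hL0 : (R (-1)).comp A₁ + (R 0).comp A₀ = 1 := by
    have h := hleft 0
    norm_num at h
    exact h
  have hR0 : A₁.comp (R (-1)) + A₀.comp (R 0) = 1 := by
    have h := hright 0
    norm_num at h
    exact h
  -- the sequence Tₙ = R₋ₙ₋₂ A₁ Rₙ is constant
  set T : ℕ → (K →L[ℂ] H) := fun n =>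
    (R (-(n : ℤ) - 2)).comp (A₁.comp (R (n : ℤ))) with hT
  have hstep : ∀ n : ℕ, T n = T (n + 1) := by
    intro n
    have h1 : A₁.comp (R (n : ℤ)) = -(A₀.comp (R ((n : ℤ) + 1))) := by
      have := hR ((n : ℤ) + 1) (by positivity)
      simpa using this
    have h2 : (R (-(n : ℤ) - 3)).comp A₁ = -((R (-(n : ℤ) - 2)).comp A₀) := by
      have := hL (-(n : ℤ) - 2) (by omega)
      have e : (-(n : ℤ) - 2) - 1 = -(n : ℤ) - 3 := by ring
      rwa [e] at this
    have hT1 : T (n + 1) = (R (-(n : ℤ) - 3)).comp (A₁.comp (R ((n : ℤ) + 1))) := by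
      simp only [hT, Nat.cast_add, Nat.cast_one]
      have e : -((n : ℤ) + 1) - 2 = -(n : ℤ) - 3 := by ring
      rw [e]
    calc T n = (R (-(n : ℤ) - 2)).comp (A₁.comp (R (n : ℤ))) := rfl
      _ = (R (-(n : ℤ) - 2)).comp (-(A₀.comp (R ((n : ℤ) + 1)))) := by rw [h1]
      _ = -(((R (-(n : ℤ) - 2)).comp A₀).comp (R ((n : ℤ) + 1))) := by
          rw [comp_neg, comp_assoc]
      _ = ((R (-(n : ℤ) - 3)).comp A₁).comp (R ((n : ℤ) + 1)) := by
          rw [h2, neg_comp]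
      _ = T (n + 1) := by rw [hT1, comp_assoc]
  have hconst : ∀ n : ℕ, T 0 = T n := by
    intro n
    induction n with
    | zero => rfl
    | succ k ih => rw [ih, hstep k]
  -- norm bound forces T 0 = 0
  have key : (R (-2)).comp (A₁.comp (R 0)) = 0 := by
    have hT0 : T 0 = (R (-2)).comp (A₁.comp (R 0)) := by rw [hT]; norm_num
    rw [← hT0]
    set ε := (r - s) / 4 with hε
    have hε0 : 0 < ε := by rw [hε]; linarith
    have hlt : s + ε < r - ε := by rw [hε]; linarith
    obtain ⟨c, d, hc, hd, hb⟩ := hgb ε ε hε0 hε0 hlt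
    set a := s + ε with ha
    set b := r - ε with hb'
    have ha0 : 0 < a := by positivity
    have hb0 : 0 < b := lt_trans ha0 hlt
    set q := a / b with hq
    have hq0 : 0 ≤ q := by positivity
    have hq1 : q < 1 := (div_lt_one hb0).mpr hlt
    set C := d * a ^ 2 * ‖A₁‖ * c with hC
    have hbound : ∀ n : ℕ, ‖T 0‖ ≤ C * q ^ n := by
      intro n
      rw [hconst n]
      have h1 : ‖T n‖ ≤ ‖R (-(n : ℤ) - 2)‖ * (‖A₁‖ * ‖R (n : ℤ)‖) := by
        refine le_trans (opNorm_comp_le _ _) ?_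
        exact mul_le_mul_of_nonneg_left (opNorm_comp_le _ _) (norm_nonneg _)
      have h2 : ‖R (-(n : ℤ) - 2)‖ ≤ d * a ^ (n + 2) := by
        have h := (hb (n + 2)).2
        have e : (-(((n : ℕ) + 2 : ℕ) : ℤ)) = -(n : ℤ) - 2 := by push_cast; ring
        rwa [e] at h
      have h3 : ‖R (n : ℤ)‖ ≤ c / b ^ n := (hb n).1
      have h4 : ‖T n‖ ≤ (d * a ^ (n + 2)) * (‖A₁‖ * (c / b ^ n)) := by
        refine le_trans h1 ?_
        gcongr
      refine le_trans h4 (le_of_eq ?_)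
      rw [hC, hq]
      field_simp
      ring_nf
      rw [inv_pow, mul_assoc (a ^ 2 * a ^ n * ‖A₁‖), mul_inv_cancel₀ (pow_ne_zero _ hb0.ne'), mul_one]
    have hlim : Tendsto (fun n : ℕ => C * q ^ n) atTop (nhds 0) := by
      have := tendsto_pow_atTop_nhds_zero_of_lt_one hq0 hq1
      simpa using this.const_mul C
    have h5 : ‖T 0‖ ≤ 0 := ge_of_tendsto' hlim hbound
    have h6 := le_antisymm h5 (norm_nonneg _)
    exact norm_eq_zero.mp h6
  -- pointwise versions of everything
  have keyx : ∀ y : K, R (-2) (A₁ (R 0 y)) = 0 := by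
    intro y
    have := congrArg (fun f : K →L[ℂ] H => f y) key
    simpa using this
  have hL0x : ∀ x : H, R (-1) (A₁ x) = x - R 0 (A₀ x) := by
    intro x
    have h := congrArg (fun f : H →L[ℂ] H => f x) hL0
    simp only [add_apply, comp_apply, one_apply] at h
    exact eq_sub_of_add_eq h
  have hR0x : ∀ y : K, A₁ (R (-1) y) = y - A₀ (R 0 y) := by
    intro y
    have h := congrArg (fun f : K →L[ℂ] K => f y) hR0
    simp only [add_apply, comp_apply, one_apply] at h
    exact eq_sub_of_add_eq h
  have hRA0x : ∀ x : H, R (-1) (A₀ x) = -(R (-2) (A₁ x)) := by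
    intro x
    have h := hL (-1) (by norm_num)
    have e : (-1 : ℤ) - 1 = -2 := by norm_num
    rw [e] at h
    have h2 := congrArg (fun f : H →L[ℂ] H => f x) h
    simp only [comp_apply, neg_apply] at h2
    rw [h2, neg_neg]
  have hidem : ∀ x : H, R (-1) (A₁ (R (-1) (A₁ x))) = R (-1) (A₁ x) := by
    intro x
    rw [hR0x (A₁ x), map_sub, hRA0x, keyx]
    simp
  have hcommx : ∀ Ai ∈ ({A₀, A₁} : Set (H →L[ℂ] K)), ∀ x : H,
      A₁ (R (-1) (Ai x)) = Ai (R (-1) (A₁ x)) := by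
    intro Ai hAi x
    rcases hAi with h | h
    · rw [h, hR0x (A₀ x), hL0x x, map_sub]
    · simp only [Set.mem_singleton_iff] at h
      rw [h]
  -- conclusion
  intro Ai hAi
  have hc := hcommx Ai hAi
  ext x
  simp only [add_apply, comp_apply, sub_apply, one_apply, map_sub]
  simp only [hc, hidem]
  simp only [ContinuousLinearMap.one_apply, ContinuousLinearMap.coe_one, id_eq]
  abel
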